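/- Under the spectral hypotheses, for every k ∈ ℕ, every s ∈ {1,…,d} and every s-dimensional subspace V ⊆ ℝ^d, there exist an index j̄ = j̄(k,V) ∈ ℕ and a constant C = C(k,V) > 0 such that for all j ≥ k + j̄: ∠( Φ(j,k)V, Φ(j,k)𝒯_k(V) ) ≤ C · q^{j−k}, where q := max_{i=1,…,ℓ−1} σ_{i+1}^+/σ_i^- (with q := 0 if ℓ = 1). -/

import Mathlib

open Filter

noncomputable section

abbrev Euc (d : ℕ) := EuclideanSpace ℝ (Fin d)

/-- Angle between the lines spanned by two vectors. -/
noncomputable def vecAngle {d : ℕ} (v w : Euc d) : ℝ :=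
  Real.arccos (|(inner ℝ v w : ℝ)| / (‖v‖ * ‖w‖))

/-- Largest principal angle between two subspaces of equal dimension. -/
noncomputable def subAngle {d : ℕ} (V W : Submodule ℝ (Euc d)) : ℝ :=
  Real.arccos (sInf {c : ℝ | ∃ v ∈ V, ‖v‖ = 1 ∧
    c = sSup {r : ℝ | ∃ w ∈ W, ‖w‖ = 1 ∧ r = (inner ℝ v w : ℝ)}})

/-- Forward product `A (m+n-1) ⋯ A m`. -/
noncomputable def PhiF {d : ℕ} (A : ℕ → (Euc d →L[ℝ] Euc d)) (m : ℕ) : ℕ → (Euc d →L[ℝ] Euc d)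
  | 0 => 1
  | n + 1 => A (m + n) ∘L PhiF A m n

/-- Solution operator `Φ(n,m) = A_{n-1} ⋯ A_m` for `n ≥ m`,
`Φ(n,m) = A_n⁻¹ ⋯ A_{m-1}⁻¹` for `n < m`. -/
noncomputable def Phi {d : ℕ} (A : ℕ → (Euc d →L[ℝ] Euc d)) (n m : ℕ) : Euc d →L[ℝ] Euc d :=
  if m ≤ n then PhiF A m (n - m) else Ring.inverse (PhiF A n (m - n))

/-- `a_{m,n}(V) = Σ_{j=m}^n ∠(Φ(j-1,0)V, Φ(j,0)V)`. -/
noncomputable def angSum {d : ℕ} (A : ℕ → (Euc d →L[ℝ] Euc d)) (V : Submodule ℝ (Euc d))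
    (m n : ℕ) : ℝ :=
  ∑ j ∈ Finset.Icc m n, subAngle (V.map (Phi A (j - 1) 0 : Euc d →ₗ[ℝ] Euc d)) (V.map (Phi A j 0 : Euc d →ₗ[ℝ] Euc d))

/-- Fiber projector `𝒫_{k,i} = P_{k,i}^s − P_{k,i+1}^s`. -/
noncomputable def fiberP {d : ℕ} (P : ℕ → ℕ → (Euc d →L[ℝ] Euc d)) (k i : ℕ) :
    Euc d →L[ℝ] Euc d :=
  P k i - P k (i + 1)

/-- The spectral fiber `𝒲_k^i = range 𝒫_{k,i}`. -/
noncomputable def fiberW {d : ℕ} (P : ℕ → ℕ → (Euc d →L[ℝ] Euc d)) (k i : ℕ) :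
    Submodule ℝ (Euc d) :=
  LinearMap.range (fiberP P k i : Euc d →ₗ[ℝ] Euc d)

/-- The trace space `𝒯_k(V) = Σ_{i=1}^ℓ 𝒫_{k,i}(Q_{k,i}^s V)`, where
`Q_{k,i}^s V = range(P_{k,i}^s) ∩ V`. -/
noncomputable def traceSpace {d : ℕ} (P : ℕ → ℕ → (Euc d →L[ℝ] Euc d)) (ℓ k : ℕ)
    (V : Submodule ℝ (Euc d)) : Submodule ℝ (Euc d) :=
  ⨆ i ∈ Finset.Icc 1 ℓ, (LinearMap.range (P k i : Euc d →ₗ[ℝ] Euc d) ⊓ V).map (fiberP P k i : Euc d →ₗ[ℝ] Euc d)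

/-- `V` is a trace space at time `k`: a (direct) sum of subspaces of the fibers. -/
def IsTraceAt {d : ℕ} (P : ℕ → ℕ → (Euc d →L[ℝ] Euc d)) (ℓ k : ℕ)
    (V : Submodule ℝ (Euc d)) : Prop :=
  ∃ W : ℕ → Submodule ℝ (Euc d),
    (∀ i, 1 ≤ i → i ≤ ℓ → W i ≤ fiberW P k i) ∧ V = ⨆ i ∈ Finset.Icc 1 ℓ, W i

set_option synthInstance.maxHeartbeats 1000000 in
lemma norm_factor_of_ker_le {E F G : Type*} [NormedAddCommGroup E] [NormedSpace ℝ E]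
    [NormedAddCommGroup F] [NormedSpace ℝ F] [NormedAddCommGroup G] [NormedSpace ℝ G]
    [FiniteDimensional ℝ E]
    (f : E →ₗ[ℝ] F) (g : E →ₗ[ℝ] G) (h : LinearMap.ker f ≤ LinearMap.ker g) :
    ∃ c : ℝ, 0 ≤ c ∧ ∀ x, ‖g x‖ ≤ c * ‖f x‖ := by
  let gq : (E ⧸ LinearMap.ker f) →ₗ[ℝ] G := (LinearMap.ker f).liftQ g h
  let φ : (LinearMap.range f) →ₗ[ℝ] G := gq.comp f.quotKerEquivRange.symm.toLinearMap
  let φ' := LinearMap.toContinuousLinearMap φ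
  refine ⟨‖φ'‖, ContinuousLinearMap.opNorm_nonneg _, fun x => ?_⟩
  have h1 : φ' ⟨f x, LinearMap.mem_range_self f x⟩ = g x := by
    show φ ⟨f x, LinearMap.mem_range_self f x⟩ = g x
    have h2 : f.quotKerEquivRange.symm ⟨f x, LinearMap.mem_range_self f x⟩
        = (LinearMap.ker f).mkQ x := f.quotKerEquivRange_symm_apply_image x _
    simp only [φ, LinearMap.comp_apply, LinearEquiv.coe_coe, h2]
    simp [gq]
  calc ‖g x‖ = ‖φ' ⟨f x, LinearMap.mem_range_self f x⟩‖ := by rw [h1]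
    _ ≤ ‖φ'‖ * ‖(⟨f x, LinearMap.mem_range_self f x⟩ : LinearMap.range f)‖ := φ'.le_opNorm _
    _ = ‖φ'‖ * ‖f x‖ := rfl

lemma PhiF_isUnit {d : ℕ} (A : ℕ → (Euc d →L[ℝ] Euc d)) (hA : ∀ n, IsUnit (A n)) (m : ℕ) :
    ∀ n, IsUnit (PhiF A m n)
  | 0 => isUnit_one
  | (n+1) => by
      show IsUnit (A (m + n) * PhiF A m n)
      exact (hA _).mul (PhiF_isUnit A hA m n)

lemma Phi_self {d : ℕ} (A : ℕ → (Euc d →L[ℝ] Euc d)) (j : ℕ) : Phi A j j = 1 := by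
  simp [Phi, PhiF]

lemma Phi_left_inv {d : ℕ} (A : ℕ → (Euc d →L[ℝ] Euc d)) (hA : ∀ n, IsUnit (A n))
    {k j : ℕ} (hkj : k ≤ j) : (Phi A k j) ∘L (Phi A j k) = 1 := by
  rcases eq_or_lt_of_le hkj with rfl | hlt
  · rw [Phi_self]; exact one_mul 1
  · have h1 : ¬ j ≤ k := not_le.mpr hlt
    simp only [Phi, if_pos hkj, if_neg h1]
    show Ring.inverse (PhiF A k (j - k)) * (PhiF A k (j - k)) = 1
    exact Ring.inverse_mul_cancel _ (PhiF_isUnit A hA k _)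

lemma telescope_Icc {M : Type*} [AddCommGroup M] (f : ℕ → M) (L : ℕ) :
    ∑ i ∈ Finset.Icc 1 L, (f i - f (i+1)) = f 1 - f (L+1) := by
  induction L with
  | zero => simp
  | succ L ih =>
      rw [Finset.sum_Icc_succ_top (by omega), ih]
      abel

lemma inner_normalize_ge {E : Type*} [NormedAddCommGroup E] [InnerProductSpace ℝ E]
    {u t : E} (hu : ‖u‖ = 1) (ht : t ≠ 0) {e : ℝ} (he0 : 0 ≤ e) (he1 : e ≤ 1)
    (hd : ‖u - t‖ ≤ e) : Real.sqrt (1 - e^2) ≤ (inner ℝ u (‖t‖⁻¹ • t) : ℝ) := by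
  set b := Real.sqrt (1 - e^2) with hb
  have hb0 : 0 ≤ b := Real.sqrt_nonneg _
  have hbsq : b^2 = 1 - e^2 := Real.sq_sqrt (by nlinarith)
  have ht0 : (0:ℝ) < ‖t‖ := norm_pos_iff.mpr ht
  have hexp : ‖u - t‖^2 = ‖u‖^2 - 2 * (inner ℝ u t : ℝ) + ‖t‖^2 := norm_sub_sq_real u t
  have h2 : ‖u - t‖^2 ≤ e^2 := by nlinarith [norm_nonneg (u - t)]
  have hkey : b * ‖t‖ ≤ (inner ℝ u t : ℝ) := by nlinarith [sq_nonneg (b - ‖t‖)]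
  rw [real_inner_smul_right]
  calc b = ‖t‖⁻¹ * (b * ‖t‖) := by field_simp
    _ ≤ ‖t‖⁻¹ * (inner ℝ u t : ℝ) := by
        apply mul_le_mul_of_nonneg_left hkey (by positivity)

lemma arccos_antitone {x y : ℝ} (h : x ≤ y) : Real.arccos y ≤ Real.arccos x := by
  simp only [Real.arccos]
  have := Real.monotone_arcsin h
  linarith


set_option maxHeartbeats 2000000 in
set_option synthInstance.maxHeartbeats 400000 in
/-- **Theorem 3.4 / Th2, reduction theorem.** Under the spectral hypotheses,
for every `k`, `s` and every `s`-dimensional subspace `V ⊆ ℝ^d` there are an index `j̄` and a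
constant `C > 0` such that for all `j ≥ k + j̄`,
`∠(Φ(j,k)V, Φ(j,k)𝒯_k(V)) ≤ C q^{j−k}` with `q = max_{i<ℓ} σ_{i+1}^+/σ_i^-` (`q = 0` if
`ℓ = 1`; note `sSup ∅ = 0` in `ℝ`). -/
theorem angle_to_traceSpace_decay
    {d : ℕ} (A : ℕ → (Euc d →L[ℝ] Euc d)) (hA : ∀ n, IsUnit (A n))
    (hbd : ∃ Cb : ℝ, ∀ n, ‖A n‖ + ‖Ring.inverse (A n)‖ ≤ Cb)
    (ℓ : ℕ) (hℓ : 1 ≤ ℓ) (K : ℝ) (hK : 1 ≤ K)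
    (σm σp : ℕ → ℝ)
    (hσ0 : ∀ i, 1 ≤ i → i ≤ ℓ → 0 < σm i)
    (hσ1 : ∀ i, 1 ≤ i → i ≤ ℓ → σm i ≤ σp i)
    (hσ2 : ∀ i, 1 ≤ i → i < ℓ → σp (i + 1) < σm i)
    (P : ℕ → ℕ → (Euc d →L[ℝ] Euc d))
    (hproj : ∀ n i, 1 ≤ i → i ≤ ℓ + 1 → P n i ∘L P n i = P n i)
    (hP1 : ∀ n, P n 1 = 1)
    (hPl : ∀ n, P n (ℓ + 1) = 0)
    (hcomm : ∀ n m i, 1 ≤ i → i ≤ ℓ + 1 → P n i ∘L Phi A n m = Phi A n m ∘L P m i)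
    (hrange : ∀ n i, 1 ≤ i → i ≤ ℓ → LinearMap.range (P n (i + 1) : Euc d →ₗ[ℝ] Euc d) ≤ LinearMap.range (P n i : Euc d →ₗ[ℝ] Euc d))
    (hker : ∀ n i, 1 ≤ i → i ≤ ℓ → LinearMap.ker (P n i : Euc d →ₗ[ℝ] Euc d) ≤ LinearMap.ker (P n (i + 1) : Euc d →ₗ[ℝ] Euc d))
    (hbndS : ∀ i, 1 ≤ i → i ≤ ℓ → ∀ n m : ℕ, m ≤ n →
      ‖Phi A n m ∘L P m (i + 1)‖ ≤ K * (if i = ℓ then (0 : ℝ) else σp (i + 1)) ^ (n - m))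
    (hbndU : ∀ i, 1 ≤ i → i ≤ ℓ → ∀ n m : ℕ, m ≤ n →
      ‖Phi A m n ∘L (1 - P n (i + 1))‖ ≤ K * (σm i ^ (n - m))⁻¹)
    (k s : ℕ) (hs1 : 1 ≤ s) (hsd : s ≤ d)
    (V : Submodule ℝ (Euc d)) (hV : Module.finrank ℝ V = s) :
    ∃ jb : ℕ, ∃ C : ℝ, 0 < C ∧ ∀ j : ℕ, k + jb ≤ j →
      subAngle (V.map (Phi A j k : Euc d →ₗ[ℝ] Euc d)) ((traceSpace P ℓ k V).map (Phi A j k : Euc d →ₗ[ℝ] Euc d)) ≤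
        C * (sSup {x : ℝ | ∃ i, 1 ≤ i ∧ i < ℓ ∧ x = σp (i + 1) / σm i}) ^ (j - k) := by
  classical
  have hK0 : (0:ℝ) < K := lt_of_lt_of_le one_pos hK
  have hd1 : 1 ≤ d := le_trans hs1 hsd
  set Q : Set ℝ := {x : ℝ | ∃ i, 1 ≤ i ∧ i < ℓ ∧ x = σp (i + 1) / σm i} with hQdef
  set q : ℝ := sSup Q with hqdef
  have hσp0 : ∀ i, 1 ≤ i → i ≤ ℓ → 0 < σp i :=
    fun i h1 h2 => lt_of_lt_of_le (hσ0 i h1 h2) (hσ1 i h1 h2)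
  have hq0 : 0 ≤ q := by
    apply Real.sSup_nonneg
    rintro x ⟨i, h1, h2, rfl⟩
    have := hσ0 i h1 (le_of_lt h2)
    have := hσp0 (i+1) (by omega) (by omega)
    positivity
  have hqn0 : ∀ m : ℕ, 0 ≤ q ^ m := fun m => pow_nonneg hq0 m
  have hQbdd : BddAbove Q := by
    apply Set.Finite.bddAbove
    apply Set.Finite.subset ((Set.finite_Icc 1 ℓ).image (fun i => σp (i+1) / σm i))
    rintro x ⟨i, h1, h2, rfl⟩
    exact ⟨i, ⟨h1, le_of_lt h2⟩, rfl⟩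
  have hqge : ∀ i, 1 ≤ i → i < ℓ → σp (i+1) ≤ q * σm i := by
    intro i h1 h2
    have hmem : σp (i+1) / σm i ∈ Q := ⟨i, h1, h2, rfl⟩
    have := le_csSup hQbdd hmem
    rw [div_le_iff₀ (hσ0 i h1 (le_of_lt h2))] at this
    linarith [this]
  have hmono : ∀ a b : ℕ, 1 ≤ a → a ≤ b → b ≤ ℓ → σp b ≤ σp a := by
    intro a b ha hab
    induction b with
    | zero => omega
    | succ b ih =>
        intro hbl
        rcases Nat.lt_or_ge a (b+1) with h | h
        · have h1b : 1 ≤ b := by omega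
          have hstep : σp (b+1) ≤ σp b :=
            le_trans (le_of_lt (hσ2 b h1b (by omega))) (hσ1 b h1b (by omega))
          exact le_trans hstep (ih (by omega) (by omega))
        · have : a = b+1 := by omega
          rw [this]
  -- projector algebra
  have happly : ∀ n i, 1 ≤ i → i ≤ ℓ + 1 → ∀ x, P n i (P n i x) = P n i x := by
    intro n i h1 h2 x
    have h := hproj n i h1 h2
    calc P n i (P n i x) = (P n i ∘L P n i) x := rfl
      _ = P n i x := by rw [h]
  have hPP : ∀ n i, 1 ≤ i → i ≤ ℓ → ∀ x, P n (i+1) (P n i x) = P n (i+1) x := by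
    intro n i h1 h2 x
    have hx : x - P n i x ∈ LinearMap.ker (P n i : Euc d →ₗ[ℝ] Euc d) := by
      simp [LinearMap.mem_ker, map_sub, happly n i h1 (by omega) x]
    have h3 := hker n i h1 h2 hx
    simp only [LinearMap.mem_ker, ContinuousLinearMap.coe_coe, map_sub, sub_eq_zero] at h3
    exact h3.symm
  have hfib0 : ∀ n i, 1 ≤ i → i ≤ ℓ → ∀ x, P n (i+1) (fiberP P n i x) = 0 := by
    intro n i h1 h2 x
    have : fiberP P n i x = P n i x - P n (i+1) x := rfl
    rw [this, map_sub, hPP n i h1 h2 x, happly n (i+1) (by omega) (by omega) x, sub_self]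
  -- norms of projectors
  have hnormP : ∀ n i, 1 ≤ i → i ≤ ℓ + 1 → ‖P n i‖ ≤ K := by
    intro n i h1 h2
    rcases Nat.lt_or_ge i 2 with h | h
    · have : i = 1 := by omega
      rw [this, hP1]
      calc ‖(1 : Euc d →L[ℝ] Euc d)‖ ≤ 1 := by
            rw [ContinuousLinearMap.one_def]; exact ContinuousLinearMap.norm_id_le
        _ ≤ K := hK
    · have hb := hbndS (i-1) (by omega) (by omega) n n le_rfl
      rw [show (i-1)+1 = i by omega, Phi_self, Nat.sub_self, pow_zero, mul_one] at hb
      calc ‖P n i‖ = ‖(1 : Euc d →L[ℝ] Euc d) ∘L P n i‖ := by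
            rw [ContinuousLinearMap.one_def, ContinuousLinearMap.id_comp]
        _ ≤ K := hb
  have hnormfib : ∀ n i, 1 ≤ i → i ≤ ℓ → ‖fiberP P n i‖ ≤ 2*K := by
    intro n i h1 h2
    have : fiberP P n i = P n i - P n (i+1) := rfl
    rw [this]
    calc ‖P n i - P n (i+1)‖ ≤ ‖P n i‖ + ‖P n (i+1)‖ := norm_sub_le _ _
      _ ≤ K + K := add_le_add (hnormP n i h1 (by omega)) (hnormP n (i+1) (by omega) (by omega))
      _ = 2*K := by ring
  have hcommfib : ∀ n m i, 1 ≤ i → i ≤ ℓ →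
      (fiberP P n i) ∘L Phi A n m = Phi A n m ∘L fiberP P m i := by
    intro n m i h1 h2
    simp only [fiberP, ContinuousLinearMap.sub_comp, ContinuousLinearMap.comp_sub,
      hcomm n m i h1 (by omega), hcomm n m (i+1) (by omega) (by omega)]
  -- lower bound
  have hlow : ∀ j, k ≤ j → ∀ i, 1 ≤ i → i ≤ ℓ → ∀ v : Euc d,
      σm i ^ (j-k) * ‖fiberP P k i v‖ ≤ 2*K^2 * ‖Phi A j k v‖ := by
    intro j hkj i h1 h2 v
    set g : Euc d := fiberP P k i v with hg
    have hcancel : Phi A k j (Phi A j k g) = g := by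
      have h := Phi_left_inv A hA hkj
      calc Phi A k j (Phi A j k g) = ((Phi A k j) ∘L (Phi A j k)) g := rfl
        _ = g := by rw [h]; rfl
    have hPg : P k (i+1) g = 0 := hfib0 k i h1 h2 v
    have hproj_g : (1 - P j (i+1)) (Phi A j k g) = Phi A j k g := by
      have h3 : P j (i+1) (Phi A j k g) = 0 := by
        have hc := hcomm j k (i+1) (by omega) (by omega)
        calc P j (i+1) (Phi A j k g) = (P j (i+1) ∘L Phi A j k) g := rfl
          _ = (Phi A j k ∘L P k (i+1)) g := by rw [hc]
          _ = Phi A j k (P k (i+1) g) := rfl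
          _ = 0 := by rw [hPg]; simp
      simp [ContinuousLinearMap.sub_apply, h3]
    have hgle : ‖g‖ ≤ (K * (σm i ^ (j-k))⁻¹) * ‖Phi A j k g‖ := by
      have hb := hbndU i h1 h2 j k hkj
      calc ‖g‖ = ‖(Phi A k j ∘L (1 - P j (i+1))) (Phi A j k g)‖ := by
            rw [ContinuousLinearMap.comp_apply, hproj_g, hcancel]
        _ ≤ ‖Phi A k j ∘L (1 - P j (i+1))‖ * ‖Phi A j k g‖ := ContinuousLinearMap.le_opNorm _ _
        _ ≤ (K * (σm i ^ (j-k))⁻¹) * ‖Phi A j k g‖ :=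
            mul_le_mul_of_nonneg_right hb (norm_nonneg _)
    have hgup : ‖Phi A j k g‖ ≤ (2*K) * ‖Phi A j k v‖ := by
      have hcf := hcommfib j k i h1 h2
      calc ‖Phi A j k g‖ = ‖(Phi A j k ∘L fiberP P k i) v‖ := rfl
        _ = ‖(fiberP P j i ∘L Phi A j k) v‖ := by rw [hcf]
        _ = ‖fiberP P j i (Phi A j k v)‖ := rfl
        _ ≤ ‖fiberP P j i‖ * ‖Phi A j k v‖ := ContinuousLinearMap.le_opNorm _ _
        _ ≤ (2*K) * ‖Phi A j k v‖ :=
            mul_le_mul_of_nonneg_right (hnormfib j i h1 h2) (norm_nonneg _)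
    have hσpos : (0:ℝ) < σm i ^ (j-k) := pow_pos (hσ0 i h1 h2) _
    calc σm i ^ (j-k) * ‖g‖
        ≤ σm i ^ (j-k) * ((K * (σm i ^ (j-k))⁻¹) * ‖Phi A j k g‖) :=
          mul_le_mul_of_nonneg_left hgle (le_of_lt hσpos)
      _ = K * ‖Phi A j k g‖ := by field_simp
      _ ≤ K * ((2*K) * ‖Phi A j k v‖) := mul_le_mul_of_nonneg_left hgup (le_of_lt hK0)
      _ = 2*K^2 * ‖Phi A j k v‖ := by ring
  -- upper bound
  have hup : ∀ j, k ≤ j → ∀ i, 2 ≤ i → i ≤ ℓ → ∀ w : Euc d,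
      ‖Phi A j k (fiberP P k i w)‖ ≤ 2*K*(σp i ^ (j-k)) * ‖w‖ := by
    intro j hkj i h2 hl w
    have hσpi : 0 < σp i := hσp0 i (by omega) hl
    have hb1 : ‖Phi A j k (P k i w)‖ ≤ K * σp i ^ (j-k) * ‖w‖ := by
      have hb := hbndS (i-1) (by omega) (by omega) j k hkj
      rw [show (i-1)+1 = i by omega, if_neg (by omega : ¬ (i-1) = ℓ)] at hb
      calc ‖Phi A j k (P k i w)‖ = ‖(Phi A j k ∘L P k i) w‖ := rfl
        _ ≤ ‖Phi A j k ∘L P k i‖ * ‖w‖ := ContinuousLinearMap.le_opNorm _ _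
        _ ≤ K * σp i ^ (j-k) * ‖w‖ := mul_le_mul_of_nonneg_right hb (norm_nonneg _)
    have hb2 : ‖Phi A j k (P k (i+1) w)‖ ≤ K * σp i ^ (j-k) * ‖w‖ := by
      have hb := hbndS i (by omega) hl j k hkj
      have hle : (if i = ℓ then (0:ℝ) else σp (i+1)) ^ (j-k) ≤ σp i ^ (j-k) := by
        apply pow_le_pow_left₀
        · by_cases h : i = ℓ
          · simp [h]
          · simp only [if_neg h]
            exact (hσp0 (i+1) (by omega) (by omega)).le
        · by_cases h : i = ℓ
          · simp only [if_pos h]; exact hσpi.le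
          · simp only [if_neg h]
            exact le_trans (hσ2 i (by omega) (by omega)).le (hσ1 i (by omega) hl)
      calc ‖Phi A j k (P k (i+1) w)‖ = ‖(Phi A j k ∘L P k (i+1)) w‖ := rfl
        _ ≤ ‖Phi A j k ∘L P k (i+1)‖ * ‖w‖ := ContinuousLinearMap.le_opNorm _ _
        _ ≤ (K * (if i = ℓ then (0:ℝ) else σp (i+1)) ^ (j-k)) * ‖w‖ :=
            mul_le_mul_of_nonneg_right hb (norm_nonneg _)
        _ ≤ K * σp i ^ (j-k) * ‖w‖ := by
            apply mul_le_mul_of_nonneg_right _ (norm_nonneg _)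
            exact mul_le_mul_of_nonneg_left hle hK0.le
    have hsplit : fiberP P k i w = P k i w - P k (i+1) w := rfl
    calc ‖Phi A j k (fiberP P k i w)‖
        = ‖Phi A j k (P k i w) - Phi A j k (P k (i+1) w)‖ := by rw [hsplit, map_sub]
      _ ≤ ‖Phi A j k (P k i w)‖ + ‖Phi A j k (P k (i+1) w)‖ := norm_sub_le _ _
      _ ≤ 2*K*(σp i ^ (j-k)) * ‖w‖ := by linarith
  -- decomposition data
  set Vs : ℕ → Submodule ℝ (Euc d) := fun i => LinearMap.range (P k i : Euc d →ₗ[ℝ] Euc d) ⊓ V with hVs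
  set g : ℕ → (↥V →ₗ[ℝ] Euc d) := fun i =>
    V.subtype - ((Vs i).subtype.comp (Submodule.orthogonalProjection (Vs i)).toLinearMap).comp V.subtype
    with hgdef
  set f : ℕ → (↥V →ₗ[ℝ] (Fin ℓ → Euc d)) := fun i =>
    LinearMap.pi (fun b : Fin ℓ => if (b:ℕ)+1 < i
      then ((fiberP P k ((b:ℕ)+1)).toLinearMap).comp V.subtype else 0) with hfdef
  have hgapply : ∀ i (x : ↥V), g i x = (x : Euc d) - (Submodule.orthogonalProjection (Vs i) (x : Euc d) : Euc d) := by
    intro i x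
    simp [hgdef]
  have hfapply : ∀ i (x : ↥V) (b : Fin ℓ), (b:ℕ)+1 < i →
      f i x b = fiberP P k ((b:ℕ)+1) (x : Euc d) := by
    intro i x b hb
    simp [hfdef, hb]
  have hfapply0 : ∀ i (x : ↥V) (b : Fin ℓ), ¬ ((b:ℕ)+1 < i) → f i x b = 0 := by
    intro i x b hb
    simp [hfdef, hb]
  have hkerfg : ∀ i, 1 ≤ i → i ≤ ℓ → LinearMap.ker (f i) ≤ LinearMap.ker (g i) := by
    intro i h1 hl x hx
    rw [LinearMap.mem_ker] at hx ⊢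
    have hcoords : ∀ i', 1 ≤ i' → i' < i → fiberP P k i' (x : Euc d) = 0 := by
      intro i' h1' hi'
      have hbl : i' - 1 < ℓ := by omega
      have hcoord := congrFun hx (⟨i'-1, hbl⟩ : Fin ℓ)
      rw [hfapply i x ⟨i'-1, hbl⟩ (by simp; omega)] at hcoord
      simpa [show (i'-1)+1 = i' by omega] using hcoord
    have hPx : P k i (x : Euc d) = (x : Euc d) := by
      have key : ∀ m, m ≤ i → 1 ≤ m → P k m (x : Euc d) = (x : Euc d) := by
        intro m
        induction m with
        | zero => intro _ h; omega
        | succ m ih =>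
            intro hmi h1m
            by_cases hm0 : m = 0
            · subst hm0; rw [hP1]; rfl
            · have hx1 : P k m (x : Euc d) = (x : Euc d) := ih (by omega) (by omega)
              have hf' : P k m (x : Euc d) - P k (m+1) (x : Euc d) = 0 := by
                have := hcoords m (by omega) (by omega)
                simpa [fiberP, ContinuousLinearMap.sub_apply] using this
              have heq := sub_eq_zero.mp hf'
              rw [← heq, hx1]
      exact key i le_rfl h1
    have hxV : (x : Euc d) ∈ Vs i := ⟨⟨(x : Euc d), hPx⟩, x.2⟩
    rw [hgapply]
    rw [show ((Submodule.orthogonalProjection (Vs i) (x : Euc d)) : Euc d) = (x : Euc d) from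
      Submodule.starProjection_eq_self_iff.mpr hxV, sub_self]
  have hcex : ∀ i : ℕ, ∃ cc : ℝ, 0 ≤ cc ∧
      ((1 ≤ i ∧ i ≤ ℓ) → ∀ x : ↥V, ‖g i x‖ ≤ cc * ‖f i x‖) := by
    intro i
    by_cases h : 1 ≤ i ∧ i ≤ ℓ
    · obtain ⟨cc, hc0, hcc⟩ := norm_factor_of_ker_le (f i) (g i) (hkerfg i h.1 h.2)
      exact ⟨cc, hc0, fun _ => hcc⟩
    · exact ⟨0, le_rfl, fun h' => absurd h' h⟩
  choose c hc0 hc using hcex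
  set C0 : ℝ := 1 + ∑ i ∈ Finset.Icc 1 ℓ, 4*K^3 * c i with hC0def
  have hsum_nonneg : 0 ≤ ∑ i ∈ Finset.Icc 1 ℓ, 4*K^3 * c i := by
    apply Finset.sum_nonneg
    intro i _
    have := hc0 i
    positivity
  have hC0_1 : 1 ≤ C0 := by rw [hC0def]; linarith
  have hC0_0 : 0 < C0 := by linarith
  -- main approximation estimate
  have happrox : ∀ j, k ≤ j → ∀ v, v ∈ V → ∃ t ∈ traceSpace P ℓ k V,
      ‖Phi A j k v - Phi A j k t‖ ≤ C0 * q ^ (j-k) * ‖Phi A j k v‖ := by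
    intro j hkj v hv
    set w : ↥V := ⟨v, hv⟩ with hwdef
    set t : Euc d := ∑ i ∈ Finset.Icc 1 ℓ,
      fiberP P k i ((Submodule.orthogonalProjection (Vs i) v : Euc d)) with htdef
    have htmem : t ∈ traceSpace P ℓ k V := by
      apply Submodule.sum_mem
      intro i hi
      have hmem1 : ((Submodule.orthogonalProjection (Vs i) v : Euc d)) ∈ (LinearMap.range (P k i : Euc d →ₗ[ℝ] Euc d) ⊓ V) :=
        SetLike.coe_mem _
      have hmem2 : fiberP P k i ((Submodule.orthogonalProjection (Vs i) v : Euc d))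
          ∈ (LinearMap.range (P k i : Euc d →ₗ[ℝ] Euc d) ⊓ V).map (fiberP P k i : Euc d →ₗ[ℝ] Euc d) := Submodule.mem_map_of_mem hmem1
      exact Submodule.mem_iSup_of_mem i (Submodule.mem_iSup_of_mem hi hmem2)
    refine ⟨t, htmem, ?_⟩
    have hid : v - t = ∑ i ∈ Finset.Icc 1 ℓ,
        fiberP P k i (v - (Submodule.orthogonalProjection (Vs i) v : Euc d)) := by
      have hsum1 : ∑ i ∈ Finset.Icc 1 ℓ, fiberP P k i v = v := by
        have htel := telescope_Icc (fun i => P k i v) ℓ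
        calc ∑ i ∈ Finset.Icc 1 ℓ, fiberP P k i v
            = ∑ i ∈ Finset.Icc 1 ℓ, (P k i v - P k (i+1) v) := rfl
          _ = P k 1 v - P k (ℓ+1) v := htel
          _ = v := by rw [hP1, hPl]; simp
      calc v - t = (∑ i ∈ Finset.Icc 1 ℓ, fiberP P k i v) - t := by rw [hsum1]
        _ = ∑ i ∈ Finset.Icc 1 ℓ, (fiberP P k i v
              - fiberP P k i ((Submodule.orthogonalProjection (Vs i) v : Euc d))) := by
            rw [htdef, ← Finset.sum_sub_distrib]
        _ = ∑ i ∈ Finset.Icc 1 ℓ,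
              fiberP P k i (v - (Submodule.orthogonalProjection (Vs i) v : Euc d)) := by
            apply Finset.sum_congr rfl
            intro i _
            rw [map_sub]
    have hterm : ∀ i ∈ Finset.Icc 1 ℓ,
        ‖Phi A j k (fiberP P k i (v - (Submodule.orthogonalProjection (Vs i) v : Euc d)))‖
          ≤ (4*K^3*c i) * (q ^ (j-k) * ‖Phi A j k v‖) := by
      intro i hi
      rw [Finset.mem_Icc] at hi
      have hgw : v - (Submodule.orthogonalProjection (Vs i) v : Euc d) = g i w := (hgapply i w).symm
      have hci0 := hc0 i
      by_cases h2i : 2 ≤ i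
      · have hσpi : 0 < σp i := hσp0 i (by omega) hi.2
        have hσpin : (0:ℝ) < σp i ^ (j-k) := pow_pos hσpi _
        have hfb : ∀ b : Fin ℓ, σp i ^ (j-k) * ‖f i w b‖
            ≤ q ^ (j-k) * (2*K^2 * ‖Phi A j k v‖) := by
          intro b
          by_cases hb : (b:ℕ)+1 < i
          · rw [hfapply i w b hb]
            set i' := (b:ℕ)+1 with hi'def
            have h1' : 1 ≤ i' := by omega
            have h2' : i' < ℓ := by omega
            have hpσ : σp i ^ (j-k) ≤ σp (i'+1) ^ (j-k) :=
              pow_le_pow_left₀ hσpi.le (hmono (i'+1) i (by omega) (by omega) hi.2) _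
            have hqσ : σp (i'+1) ^ (j-k) ≤ q ^ (j-k) * σm i' ^ (j-k) := by
              calc σp (i'+1) ^ (j-k) ≤ (q * σm i') ^ (j-k) :=
                    pow_le_pow_left₀ (hσp0 (i'+1) (by omega) (by omega)).le (hqge i' h1' h2') _
                _ = q ^ (j-k) * σm i' ^ (j-k) := mul_pow _ _ _
            have hlow' := hlow j hkj i' h1' (by omega) v
            calc σp i ^ (j-k) * ‖fiberP P k i' v‖
                ≤ σp (i'+1) ^ (j-k) * ‖fiberP P k i' v‖ :=
                  mul_le_mul_of_nonneg_right hpσ (norm_nonneg _)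
              _ ≤ (q ^ (j-k) * σm i' ^ (j-k)) * ‖fiberP P k i' v‖ :=
                  mul_le_mul_of_nonneg_right hqσ (norm_nonneg _)
              _ = q ^ (j-k) * (σm i' ^ (j-k) * ‖fiberP P k i' v‖) := by ring
              _ ≤ q ^ (j-k) * (2*K^2 * ‖Phi A j k v‖) :=
                  mul_le_mul_of_nonneg_left hlow' (hqn0 _)
          · rw [hfapply0 i w b hb]
            simp only [norm_zero, mul_zero]
            apply mul_nonneg (hqn0 _)
            have : (0:ℝ) ≤ 2*K^2 := by positivity
            exact mul_nonneg this (norm_nonneg _)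
        have hfnorm : ‖f i w‖ ≤ (σp i ^ (j-k))⁻¹ * (q ^ (j-k) * (2*K^2 * ‖Phi A j k v‖)) := by
          apply (pi_norm_le_iff_of_nonneg ?_).mpr
          · intro b
            calc ‖f i w b‖ = (σp i ^ (j-k))⁻¹ * (σp i ^ (j-k) * ‖f i w b‖) := by
                  field_simp
              _ ≤ (σp i ^ (j-k))⁻¹ * (q ^ (j-k) * (2*K^2 * ‖Phi A j k v‖)) :=
                  mul_le_mul_of_nonneg_left (hfb b) (by positivity)
          · apply mul_nonneg (by positivity)
            apply mul_nonneg (hqn0 _)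
            have : (0:ℝ) ≤ 2*K^2 := by positivity
            exact mul_nonneg this (norm_nonneg _)
        have hstep : σp i ^ (j-k) * ‖f i w‖ ≤ q ^ (j-k) * (2*K^2*‖Phi A j k v‖) := by
          calc σp i ^ (j-k) * ‖f i w‖
              ≤ σp i ^ (j-k) * ((σp i ^ (j-k))⁻¹ * (q ^ (j-k) * (2*K^2 * ‖Phi A j k v‖))) :=
                mul_le_mul_of_nonneg_left hfnorm hσpin.le
            _ = q ^ (j-k) * (2*K^2*‖Phi A j k v‖) := by field_simp
        have hgnorm : ‖g i w‖ ≤ c i * ‖f i w‖ := hc i ⟨by omega, hi.2⟩ w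
        have hup' := hup j hkj i h2i hi.2 (v - (Submodule.orthogonalProjection (Vs i) v : Euc d))
        calc ‖Phi A j k (fiberP P k i (v - (Submodule.orthogonalProjection (Vs i) v : Euc d)))‖
            ≤ 2*K*(σp i ^ (j-k)) * ‖v - (Submodule.orthogonalProjection (Vs i) v : Euc d)‖ := hup'
          _ = 2*K*(σp i ^ (j-k)) * ‖g i w‖ := by rw [hgw]
          _ ≤ 2*K*(σp i ^ (j-k)) * (c i * ‖f i w‖) := by
              apply mul_le_mul_of_nonneg_left hgnorm
              positivity
          _ = 2*K*c i * (σp i ^ (j-k) * ‖f i w‖) := by ring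
          _ ≤ 2*K*c i * (q ^ (j-k) * (2*K^2*‖Phi A j k v‖)) := by
              apply mul_le_mul_of_nonneg_left hstep
              positivity
          _ = (4*K^3*c i) * (q ^ (j-k) * ‖Phi A j k v‖) := by ring
      · have hi1 : i = 1 := by omega
        have hfz : f i w = 0 := by
          ext b
          rw [hfapply0 i w b (by omega)]
          rfl
        have hgz : g i w = 0 := by
          have hle := hc i ⟨by omega, hi.2⟩ w
          rw [hfz] at hle
          simp only [norm_zero, mul_zero] at hle
          exact norm_le_zero_iff.mp hle
        rw [hgw, hgz]
        simp only [map_zero, norm_zero]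
        apply mul_nonneg
        · positivity
        · exact mul_nonneg (hqn0 _) (norm_nonneg _)
    have hΦsub : Phi A j k v - Phi A j k t = ∑ i ∈ Finset.Icc 1 ℓ,
        Phi A j k (fiberP P k i (v - (Submodule.orthogonalProjection (Vs i) v : Euc d))) := by
      rw [← map_sub, hid, map_sum]
    calc ‖Phi A j k v - Phi A j k t‖
        = ‖∑ i ∈ Finset.Icc 1 ℓ,
            Phi A j k (fiberP P k i (v - (Submodule.orthogonalProjection (Vs i) v : Euc d)))‖ := by
          rw [hΦsub]
      _ ≤ ∑ i ∈ Finset.Icc 1 ℓ,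
            ‖Phi A j k (fiberP P k i (v - (Submodule.orthogonalProjection (Vs i) v : Euc d)))‖ :=
          norm_sum_le _ _
      _ ≤ ∑ i ∈ Finset.Icc 1 ℓ, (4*K^3*c i) * (q ^ (j-k) * ‖Phi A j k v‖) :=
          Finset.sum_le_sum hterm
      _ = (∑ i ∈ Finset.Icc 1 ℓ, 4*K^3*c i) * (q ^ (j-k) * ‖Phi A j k v‖) := by
          rw [← Finset.sum_mul]
      _ ≤ C0 * (q ^ (j-k) * ‖Phi A j k v‖) := by
          apply mul_le_mul_of_nonneg_right (by linarith)
          exact mul_nonneg (hqn0 _) (norm_nonneg _)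
      _ = C0 * q ^ (j-k) * ‖Phi A j k v‖ := by ring
  -- final assembly
  refine ⟨0, (Real.pi + 2) * C0, by positivity, ?_⟩
  intro j hj
  have hkj : k ≤ j := by omega
  set ε : ℝ := C0 * q ^ (j-k) with hεdef
  have hε0 : 0 ≤ ε := mul_nonneg hC0_0.le (hqn0 _)
  have hgoal_eq : (Real.pi + 2) * C0 * q ^ (j-k) = (Real.pi + 2) * ε := by
    rw [hεdef]; ring
  rw [hgoal_eq]
  have hinj : ∀ x : Euc d, Phi A j k x = 0 → x = 0 := by
    intro x hx
    have h := Phi_left_inv A hA hkj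
    calc x = ((Phi A k j) ∘L (Phi A j k)) x := by rw [h]; rfl
      _ = Phi A k j (Phi A j k x) := rfl
      _ = 0 := by rw [hx]; simp
  -- a unit vector in the image of V
  have hVbot : V ≠ ⊥ := by
    intro hbot
    rw [hbot] at hV
    simp at hV
    omega
  obtain ⟨x0, hx0V, hx0ne⟩ := Submodule.exists_mem_ne_zero_of_ne_bot hVbot
  have hΦx0 : Phi A j k x0 ≠ 0 := fun h => hx0ne (by
    have := hinj x0 h
    exact this)
  set v1 : Euc d := ‖Phi A j k x0‖⁻¹ • Phi A j k x0 with hv1def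
  have hv1mem : v1 ∈ V.map (Phi A j k : Euc d →ₗ[ℝ] Euc d) := by
    apply Submodule.smul_mem
    exact Submodule.mem_map_of_mem hx0V
  have hv1norm : ‖v1‖ = 1 := norm_smul_inv_norm hΦx0
  have hSne : {cc : ℝ | ∃ v ∈ V.map (Phi A j k : Euc d →ₗ[ℝ] Euc d), ‖v‖ = 1 ∧
      cc = sSup {r : ℝ | ∃ w ∈ (traceSpace P ℓ k V).map (Phi A j k : Euc d →ₗ[ℝ] Euc d), ‖w‖ = 1 ∧
        r = (inner ℝ v w : ℝ)}}.Nonempty := ⟨_, v1, hv1mem, hv1norm, rfl⟩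
  rcases lt_or_ge ε 1 with hεlt | hεge
  · -- small case
    set b : ℝ := Real.sqrt (1 - ε^2) with hbdef
    have hb0 : 0 ≤ b := Real.sqrt_nonneg _
    have hlb : ∀ cc ∈ {cc : ℝ | ∃ v ∈ V.map (Phi A j k : Euc d →ₗ[ℝ] Euc d), ‖v‖ = 1 ∧
        cc = sSup {r : ℝ | ∃ w ∈ (traceSpace P ℓ k V).map (Phi A j k : Euc d →ₗ[ℝ] Euc d), ‖w‖ = 1 ∧
          r = (inner ℝ v w : ℝ)}}, b ≤ cc := by
      rintro cc ⟨v, hvmem, hvnorm, rfl⟩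
      obtain ⟨vb, hvb, hvbeq⟩ := Submodule.mem_map.mp hvmem
      obtain ⟨t, htT, htest⟩ := happrox j hkj vb hvb
      rw [show Phi A j k vb = v from hvbeq, hvnorm, mul_one] at htest
      have htest' : ‖v - Phi A j k t‖ ≤ ε := htest
      have htne : Phi A j k t ≠ 0 := by
        intro h0
        rw [h0, sub_zero, hvnorm] at htest'
        linarith
      have hwmem : ‖Phi A j k t‖⁻¹ • Phi A j k t ∈ (traceSpace P ℓ k V).map (Phi A j k : Euc d →ₗ[ℝ] Euc d) :=
        Submodule.smul_mem _ _ (Submodule.mem_map_of_mem htT)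
      have hwnorm : ‖‖Phi A j k t‖⁻¹ • Phi A j k t‖ = 1 := norm_smul_inv_norm htne
      have hinner := inner_normalize_ge hvnorm htne hε0 hεlt.le htest'
      have hbdd : BddAbove {r : ℝ | ∃ w ∈ (traceSpace P ℓ k V).map (Phi A j k : Euc d →ₗ[ℝ] Euc d), ‖w‖ = 1 ∧
          r = (inner ℝ v w : ℝ)} := by
        refine ⟨1, ?_⟩
        rintro r ⟨w, _, hwn, rfl⟩
        calc (inner ℝ v w : ℝ) ≤ ‖v‖ * ‖w‖ := real_inner_le_norm v w
          _ = 1 := by rw [hvnorm, hwn]; ring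
      calc b ≤ (inner ℝ v (‖Phi A j k t‖⁻¹ • Phi A j k t) : ℝ) := hinner
        _ ≤ sSup {r : ℝ | ∃ w ∈ (traceSpace P ℓ k V).map (Phi A j k : Euc d →ₗ[ℝ] Euc d), ‖w‖ = 1 ∧
            r = (inner ℝ v w : ℝ)} := le_csSup hbdd ⟨_, hwmem, hwnorm, rfl⟩
    have hsinf : b ≤ sInf {cc : ℝ | ∃ v ∈ V.map (Phi A j k : Euc d →ₗ[ℝ] Euc d), ‖v‖ = 1 ∧
        cc = sSup {r : ℝ | ∃ w ∈ (traceSpace P ℓ k V).map (Phi A j k : Euc d →ₗ[ℝ] Euc d), ‖w‖ = 1 ∧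
          r = (inner ℝ v w : ℝ)}} := le_csInf hSne hlb
    have harccos : subAngle (V.map (Phi A j k : Euc d →ₗ[ℝ] Euc d)) ((traceSpace P ℓ k V).map (Phi A j k : Euc d →ₗ[ℝ] Euc d))
        ≤ Real.arccos b := by
      unfold subAngle
      exact arccos_antitone hsinf
    have hsin : Real.sin (Real.arccos b) = ε := by
      rw [Real.sin_arccos, hbdef, Real.sq_sqrt (by nlinarith), show 1 - (1 - ε^2) = ε^2 by ring,
        Real.sqrt_sq hε0]
    have hθ2 : Real.arccos b ≤ Real.pi / 2 := Real.arccos_le_pi_div_two.mpr hb0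
    have hθ0 : 0 ≤ Real.arccos b := Real.arccos_nonneg _
    have hjordan := Real.mul_le_sin hθ0 hθ2
    rw [hsin] at hjordan
    have hπ : 0 < Real.pi := Real.pi_pos
    have h2θ : 2 * Real.arccos b ≤ Real.pi * ε := by
      have h := mul_le_mul_of_nonneg_left hjordan hπ.le
      rw [show Real.pi * (2 / Real.pi * Real.arccos b) = 2 * Real.arccos b from by
        field_simp] at h
      linarith
    calc subAngle (V.map (Phi A j k : Euc d →ₗ[ℝ] Euc d)) ((traceSpace P ℓ k V).map (Phi A j k : Euc d →ₗ[ℝ] Euc d))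
        ≤ Real.arccos b := harccos
      _ ≤ (Real.pi + 2) * ε := by nlinarith [h2θ, mul_nonneg hπ.le hε0, hε0]
  · -- large case
    have h1 : subAngle (V.map (Phi A j k : Euc d →ₗ[ℝ] Euc d)) ((traceSpace P ℓ k V).map (Phi A j k : Euc d →ₗ[ℝ] Euc d))
        ≤ Real.pi := by
      unfold subAngle
      exact Real.arccos_le_pi _
    have hπ : 0 < Real.pi := Real.pi_pos
    calc subAngle (V.map (Phi A j k : Euc d →ₗ[ℝ] Euc d)) ((traceSpace P ℓ k V).map (Phi A j k : Euc d →ₗ[ℝ] Euc d))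
        ≤ Real.pi := h1
      _ ≤ (Real.pi + 2) * ε := by nlinarith
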